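/- Let p(x,y) be a real polynomial with exactly 3 monomials, 2 of which have positive coefficients and 1 has a negative coefficient, such that p(x,y) = 1 whenever x + y = 1. Then, up to swapping x and y, either p(x,y) = x² + 2y − y², or p(x,y) = αx + αy − (α−1) for some α > 1. -/

import Mathlib

set_option maxHeartbeats 1000000

section UnivariateHelpers

open Polynomial

lemma L1 (n k : ℕ) : ((1 - X : ℝ[X])^n).coeff k = (-1)^k * (n.choose k) := by
  have h : (1 - X : ℝ[X]) = C (-1) * (X + C (-1)) := by
    simp [mul_add, ← C_mul]; ring
  rw [h, mul_pow, ← C_pow, coeff_C_mul, coeff_X_add_C_pow]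
  rcases le_or_gt k n with hk | hk
  · have h1 : (-1:ℝ)^(n-k) * (-1)^k = (-1)^n := by rw [← pow_add]; congr 1; omega
    calc (-1:ℝ)^n * ((-1)^(n-k) * n.choose k) = ((-1)^(n-k) * (-1)^k)*((-1)^(n-k) * n.choose k) := by rw [h1]
    _ = ((-1)^(n-k))^2 * ((-1)^k * n.choose k) := by ring
    _ = (-1)^k * n.choose k := by rw [← pow_mul, pow_mul', neg_one_sq, one_pow, one_mul]
  · simp [Nat.choose_eq_zero_of_lt hk]

lemma L2 (i j k : ℕ) : ((X:ℝ[X])^i * (1 - X)^j).coeff k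
    = if i ≤ k then ((-1:ℝ))^(k-i) * (j.choose (k-i)) else 0 := by
  rw [mul_comm, coeff_mul_X_pow']
  split_ifs <;> simp [L1]

lemma Lev0 (i j : ℕ) : eval 0 ((X:ℝ[X])^i * (1 - X)^j) = if i = 0 then 1 else 0 := by
  simp [zero_pow_eq]

lemma Lev1 (i j : ℕ) : eval 1 ((X:ℝ[X])^i * (1 - X)^j) = if j = 0 then 1 else 0 := by
  simp [zero_pow_eq]

noncomputable def τ : ℝ[X] →ₐ[ℝ] ℝ[X] := aeval (1 - X)

lemma Lτ (r : ℝ) (i j : ℕ) : τ (C r * ((X:ℝ[X])^i * (1 - X)^j)) = C r * ((X:ℝ[X])^j * (1 - X)^i) := by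
  simp only [τ, map_mul, map_pow, map_sub, map_one, aeval_X, aeval_C, algebraMap_eq, sub_sub_cancel]
  ring

lemma tt_le {i2 j2 i3 j3 : ℕ} {b c : ℝ} (hb : b ≠ 0)
    (h : C b * ((X:ℝ[X])^i2*(1-X)^j2) = C c * ((X:ℝ[X])^i3*(1-X)^j3)) : i3 ≤ i2 := by
  by_contra hlt
  have h2 := congrArg (fun q => coeff q i2) h
  simp [coeff_C_mul, L2, hlt] at h2
  exact hb h2

lemma two_term {i2 j2 i3 j3 : ℕ} {b c : ℝ} (hb : b ≠ 0)
    (h : C b * ((X:ℝ[X])^i2*(1-X)^j2) = C c * ((X:ℝ[X])^i3*(1-X)^j3)) :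
    i2 = i3 ∧ j2 = j3 := by
  have hc : c ≠ 0 := by
    rintro rfl
    have h2 := congrArg (fun q => coeff q i2) h
    simp [coeff_C_mul, L2] at h2
    exact hb h2
  have hτ := congrArg (fun q => τ q) h
  simp only [Lτ] at hτ
  exact ⟨le_antisymm (tt_le hc h.symm) (tt_le hb h),
    le_antisymm (tt_le hc hτ.symm) (tt_le hb hτ)⟩

lemma key3 {n u v : ℕ} {r s : ℝ} (hu : u ≠ 0) (hv : v ≠ 0) (huv : u ≠ v) (hn : n ≠ 0)
    (hr : 0 < r) (hs : s < 0)
    (h : C r * X^u + C s * X^v + (1 - X)^n = (1:ℝ[X])) :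
    r = 2 ∧ s = -1 ∧ u = 1 ∧ v = 2 ∧ n = 2 := by
  have hco : ∀ k : ℕ, r * (if u = k then 1 else 0) + s * (if v = k then 1 else 0)
      + (-1:ℝ)^k * (n.choose k) = if k = 0 then 1 else 0 := by
    intro k
    have h2 := congrArg (fun q => coeff q k) h
    simpa [coeff_C_mul, coeff_X_pow, L1, coeff_one, eq_comm] using h2
  have hcu := hco u
  have hcv := hco v
  simp [hu, hv, huv, Ne.symm huv] at hcu hcv
  -- hcu : r + (-1)^u * choose = 0  (hopefully)
  have hru : r = -((-1:ℝ)^u * (n.choose u)) := by linarith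
  have hsv : s = -((-1:ℝ)^v * (n.choose v)) := by linarith
  have hun : u % 2 = 1 ∧ r = n.choose u := by
    rcases Nat.even_or_odd u with he | ho
    · rw [he.neg_one_pow] at hru
      have : (0:ℝ) ≤ (n.choose u : ℝ) := Nat.cast_nonneg _
      nlinarith
    · rw [ho.neg_one_pow] at hru
      exact ⟨Nat.odd_iff.1 ho, by linarith⟩
  have hvn : v % 2 = 0 ∧ s = -(n.choose v : ℝ) := by
    rcases Nat.even_or_odd v with he | ho
    · rw [he.neg_one_pow] at hsv
      exact ⟨Nat.even_iff.1 he, by linarith⟩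
    · rw [ho.neg_one_pow] at hsv
      have : (0:ℝ) ≤ (n.choose v : ℝ) := Nat.cast_nonneg _
      nlinarith
  have hun2 : u ≤ n := by
    by_contra hlt
    rw [Nat.choose_eq_zero_of_lt (by omega)] at hun
    simp at hun; linarith [hun.2]
  have hvn2 : v ≤ n := by
    by_contra hlt
    rw [Nat.choose_eq_zero_of_lt (by omega)] at hvn
    simp at hvn; linarith [hvn.2]
  have hn2 : n ≤ 2 := by
    by_contra hlt
    obtain ⟨k, hk1, hk3, hku, hkv⟩ : ∃ k, 1 ≤ k ∧ k ≤ 3 ∧ k ≠ u ∧ k ≠ v := by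
      refine ⟨if 1 ≠ u ∧ 1 ≠ v then 1 else if 2 ≠ u ∧ 2 ≠ v then 2 else 3, ?_⟩
      split_ifs <;> omega
    have hck := hco k
    simp [Ne.symm hku, Ne.symm hkv, (by omega : k ≠ 0)] at hck
    have : (n.choose k : ℝ) ≠ 0 := by
      have := Nat.choose_pos (show k ≤ n by omega)
      positivity
    rw [if_neg (by omega : ¬ k = 0)] at hck
    rcases mul_eq_zero.1 hck with h0 | h0
    · exact pow_ne_zero _ (by norm_num) h0
    · exact this h0
  obtain ⟨rfl, rfl, rfl⟩ : u = 1 ∧ v = 2 ∧ n = 2 := by omega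
  refine ⟨?_, ?_, rfl, rfl, rfl⟩ <;> simp [hun.2, hvn.2] <;> norm_num

def Out (i1 j1 i2 j2 i3 j3 : ℕ) (a b c : ℝ) : Prop :=
  (a = 1 ∧ b = 2 ∧ c = -1 ∧ i1 = 2 ∧ j1 = 0 ∧ i2 = 0 ∧ j2 = 1 ∧ i3 = 0 ∧ j3 = 2) ∨
  (a = 2 ∧ b = 1 ∧ c = -1 ∧ i1 = 0 ∧ j1 = 1 ∧ i2 = 2 ∧ j2 = 0 ∧ i3 = 0 ∧ j3 = 2) ∨
  (a = 1 ∧ b = 2 ∧ c = -1 ∧ i1 = 0 ∧ j1 = 2 ∧ i2 = 1 ∧ j2 = 0 ∧ i3 = 2 ∧ j3 = 0) ∨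
  (a = 2 ∧ b = 1 ∧ c = -1 ∧ i1 = 1 ∧ j1 = 0 ∧ i2 = 0 ∧ j2 = 2 ∧ i3 = 2 ∧ j3 = 0) ∨
  (1 < a ∧ b = a ∧ c = 1 - a ∧ i1 = 1 ∧ j1 = 0 ∧ i2 = 0 ∧ j2 = 1 ∧ i3 = 0 ∧ j3 = 0) ∨
  (1 < a ∧ b = a ∧ c = 1 - a ∧ i1 = 0 ∧ j1 = 1 ∧ i2 = 1 ∧ j2 = 0 ∧ i3 = 0 ∧ j3 = 0)

lemma out_swap {i1 j1 i2 j2 i3 j3 : ℕ} {a b c : ℝ}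
    (h : Out i2 j2 i1 j1 i3 j3 b a c) : Out i1 j1 i2 j2 i3 j3 a b c := by
  rcases h with ⟨h1,h2,h3,h4,h5,h6,h7,h8,h9⟩|⟨h1,h2,h3,h4,h5,h6,h7,h8,h9⟩|⟨h1,h2,h3,h4,h5,h6,h7,h8,h9⟩|⟨h1,h2,h3,h4,h5,h6,h7,h8,h9⟩|⟨h1,h2,h3,h4,h5,h6,h7,h8,h9⟩|⟨h1,h2,h3,h4,h5,h6,h7,h8,h9⟩
  · exact Or.inr (Or.inl ⟨h2,h1,h3,h6,h7,h4,h5,h8,h9⟩)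
  · exact Or.inl ⟨h2,h1,h3,h6,h7,h4,h5,h8,h9⟩
  · exact Or.inr (Or.inr (Or.inr (Or.inl ⟨h2,h1,h3,h6,h7,h4,h5,h8,h9⟩)))
  · exact Or.inr (Or.inr (Or.inl ⟨h2,h1,h3,h6,h7,h4,h5,h8,h9⟩))
  · subst h2; exact Or.inr (Or.inr (Or.inr (Or.inr (Or.inr ⟨h1, rfl, h3, h6,h7,h4,h5,h8,h9⟩))))
  · subst h2; exact Or.inr (Or.inr (Or.inr (Or.inr (Or.inl ⟨h1, rfl, h3, h6,h7,h4,h5,h8,h9⟩))))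

lemma Eswap {i1 j1 i2 j2 i3 j3 : ℕ} {a b c : ℝ}
    (hE : C a * ((X:ℝ[X])^i1 * (1-X)^j1) + C b * ((X:ℝ[X])^i2 * (1-X)^j2)
      + C c * ((X:ℝ[X])^i3 * (1-X)^j3) = 1) :
    C a * ((X:ℝ[X])^j1 * (1-X)^i1) + C b * ((X:ℝ[X])^j2 * (1-X)^i2)
      + C c * ((X:ℝ[X])^j3 * (1-X)^i3) = 1 := by
  have h2 := congrArg (fun q => τ q) hE
  simpa only [map_add, Lτ, map_one] using h2

lemma Ev0 {i1 j1 i2 j2 i3 j3 : ℕ} {a b c : ℝ}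
    (hE : C a * ((X:ℝ[X])^i1 * (1-X)^j1) + C b * ((X:ℝ[X])^i2 * (1-X)^j2)
      + C c * ((X:ℝ[X])^i3 * (1-X)^j3) = 1) :
    a * (if i1 = 0 then 1 else 0) + b * (if i2 = 0 then 1 else 0)
      + c * (if i3 = 0 then 1 else 0) = 1 := by
  have h2 := congrArg (fun q => eval 0 q) hE
  simpa only [eval_add, eval_mul, eval_C, eval_pow, eval_sub, eval_X, eval_one, sub_zero,
    one_pow, mul_one, zero_pow_eq] using h2

lemma Ecoeff {i1 j1 i2 j2 i3 j3 : ℕ} {a b c : ℝ}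
    (hE : C a * ((X:ℝ[X])^i1 * (1-X)^j1) + C b * ((X:ℝ[X])^i2 * (1-X)^j2)
      + C c * ((X:ℝ[X])^i3 * (1-X)^j3) = 1) (k : ℕ) :
    a * (if i1 ≤ k then ((-1:ℝ))^(k-i1) * (j1.choose (k-i1)) else 0)
      + b * (if i2 ≤ k then ((-1:ℝ))^(k-i2) * (j2.choose (k-i2)) else 0)
      + c * (if i3 ≤ k then ((-1:ℝ))^(k-i3) * (j3.choose (k-i3)) else 0)
      = if k = 0 then 1 else 0 := by
  have h2 := congrArg (fun q => coeff q k) hE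
  simpa only [coeff_add, coeff_C_mul, L2, coeff_one, eq_comm] using h2

section core
variable {i1 j1 i2 j2 i3 j3 : ℕ} {a b c : ℝ}

lemma caseTFT (ha : 0 < a) (hb : 0 < b) (hc : c < 0)
    (h12 : ¬(i1 = i2 ∧ j1 = j2)) (h13 : ¬(i1 = i3 ∧ j1 = j3)) (h23 : ¬(i2 = i3 ∧ j2 = j3))
    (hE : C a * ((X:ℝ[X])^i1 * (1-X)^j1) + C b * ((X:ℝ[X])^i2 * (1-X)^j2)
      + C c * ((X:ℝ[X])^i3 * (1-X)^j3) = 1)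
    (h1 : i1 = 0) (h2 : i2 ≠ 0) (h3 : i3 = 0) :
    Out i1 j1 i2 j2 i3 j3 a b c := by
  subst h1 h3
  have h13' : j1 ≠ j3 := fun h => h13 ⟨rfl, h⟩
  have e0 : a + c = 1 := by simpa [h2] using Ev0 hE
  have e1 := Ev0 (Eswap hE)
  by_cases hj1 : j1 = 0
  · have hj3 : j3 ≠ 0 := fun h => h13' (hj1.trans h.symm)
    rw [if_pos hj1, if_neg hj3] at e1
    by_cases hj2 : j2 = 0
    · rw [if_pos hj2] at e1; nlinarith
    · rw [if_neg hj2] at e1; nlinarith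
  · by_cases hj3 : j3 = 0
    · -- family B
      rw [if_neg hj1, if_pos hj3] at e1
      have hj2 : j2 = 0 := by
        by_contra hj2
        rw [if_neg hj2] at e1; nlinarith
      rw [if_pos hj2] at e1
      subst hj2 hj3
      have hab : b = a := by nlinarith
      have hco := Ecoeff hE 1
      rw [if_pos (by omega : (0:ℕ) ≤ 1), if_pos (by omega : (0:ℕ) ≤ 1),
        if_neg (by omega : ¬ (1:ℕ) = 0)] at hco
      simp only [Nat.sub_zero, pow_one, Nat.choose_one_right, Nat.choose_zero_right] at hco
      by_cases hi2 : i2 = 1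
      · subst hi2
        rw [if_pos (le_refl 1)] at hco
        norm_num at hco
        have hj11 : (j1 : ℝ) = 1 := by
          rw [hab] at hco
          have haj : a * ((j1:ℝ) - 1) = 0 := by linarith [hco]; 
          rcases mul_eq_zero.1 haj with h | h
          · exact absurd h ha.ne'
          · linarith
        have : j1 = 1 := by exact_mod_cast hj11
        subst hab this
        exact Or.inr (Or.inr (Or.inr (Or.inr (Or.inr ⟨by linarith, rfl, by linarith, rfl, rfl, rfl, rfl, rfl, rfl⟩))))
      · rw [if_neg (by omega : ¬ i2 ≤ 1)] at hco
        norm_num at hco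
        rcases hco with h | h
        · exact absurd h ha.ne'
        · exact absurd h hj1
    · -- family A2
      rw [if_neg hj1, if_neg hj3] at e1
      obtain ⟨hb1, hj2⟩ : b = 1 ∧ j2 = 0 := by
        by_cases hj2 : j2 = 0
        · rw [if_pos hj2] at e1; exact ⟨by linarith, hj2⟩
        · rw [if_neg hj2] at e1; nlinarith
      subst hb1 hj2
      have hs := Eswap hE
      rw [map_one] at hs
      have hk : C a * X^j1 + C c * X^j3 + (1-X)^i2 = (1:ℝ[X]) := by
        linear_combination hs
      obtain ⟨hr, hs', hu, hv, hn⟩ := key3 hj1 hj3 h13' h2 ha hc hk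
      exact Or.inr (Or.inl ⟨hr, rfl, hs', rfl, hu, hn, rfl, rfl, hv⟩)
end core

section core2
variable {i1 j1 i2 j2 i3 j3 : ℕ} {a b c : ℝ}

lemma caseTFF (ha : 0 < a) (hb : 0 < b) (hc : c < 0)
    (h12 : ¬(i1 = i2 ∧ j1 = j2)) (h13 : ¬(i1 = i3 ∧ j1 = j3)) (h23 : ¬(i2 = i3 ∧ j2 = j3))
    (hE : C a * ((X:ℝ[X])^i1 * (1-X)^j1) + C b * ((X:ℝ[X])^i2 * (1-X)^j2)
      + C c * ((X:ℝ[X])^i3 * (1-X)^j3) = 1)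
    (h1 : i1 = 0) (h2 : i2 ≠ 0) (h3 : i3 ≠ 0) :
    Out i1 j1 i2 j2 i3 j3 a b c := by
  subst h1
  have ha1 : a = 1 := by simpa [h2, h3] using Ev0 hE
  subst ha1
  rw [map_one] at hE
  by_cases hj1 : j1 = 0
  · -- constant first monomial: two-term contradiction
    subst hj1
    have h2t : C b * ((X:ℝ[X])^i2*(1-X)^j2) = C (-c) * ((X:ℝ[X])^i3*(1-X)^j3) := by
      rw [map_neg]; linear_combination hE
    obtain ⟨hi, hj⟩ := two_term hb.ne' h2t
    exact absurd ⟨hi, hj⟩ h23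
  · have e1 := Ev0 (Eswap (by rw [map_one]; exact hE :
      C (1:ℝ) * ((X:ℝ[X])^0 * (1-X)^j1) + C b * ((X:ℝ[X])^i2 * (1-X)^j2)
        + C c * ((X:ℝ[X])^i3 * (1-X)^j3) = 1))
    rw [if_neg hj1] at e1
    by_cases hj2 : j2 = 0
    · rw [if_pos hj2] at e1
      by_cases hj3 : j3 = 0
      · -- family A3
        subst hj2 hj3
        have hii : i2 ≠ i3 := fun h => h23 ⟨h, rfl⟩
        have hk : C b * X^i2 + C c * X^i3 + (1-X)^j1 = (1:ℝ[X]) := by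
          linear_combination hE
        obtain ⟨hr, hs', hu, hv, hn⟩ := key3 h2 h3 hii hj1 hb hc hk
        exact Or.inr (Or.inr (Or.inl ⟨rfl, hr, hs', rfl, hn, hu, rfl, hv, rfl⟩))
      · -- b = 1; alpha=1 beta=1 case: contradiction
        rw [if_neg hj3] at e1
        have hb1 : b = 1 := by linarith
        subst hb1 hj2
        have hco := Ecoeff hE 1
        rw [if_pos (by omega : (0:ℕ) ≤ 1), if_neg (by omega : ¬ (1:ℕ) = 0)] at hco
        simp only [Nat.sub_zero, pow_one, Nat.choose_one_right] at hco
        by_cases hi3 : i3 = 1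
        · subst hi3
          rw [if_pos (le_refl 1)] at hco
          simp only [Nat.sub_self, pow_zero, Nat.choose_zero_right, Nat.cast_one, mul_one,
            one_mul] at hco
          by_cases hi2 : i2 = 1
          · subst hi2
            rw [if_pos (le_refl 1)] at hco
            simp only [Nat.sub_self, pow_zero, Nat.choose_zero_right, Nat.choose_one_right,
              Nat.cast_one, mul_one, one_mul] at hco
            have : (1:ℝ) ≤ (j1:ℝ) := by exact_mod_cast Nat.one_le_iff_ne_zero.2 hj1
            linarith
          · rw [if_neg (by omega : ¬ i2 ≤ 1)] at hco
            have : (1:ℝ) ≤ (j1:ℝ) := by exact_mod_cast Nat.one_le_iff_ne_zero.2 hj1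
            linarith
        · rw [if_neg (by omega : ¬ i3 ≤ 1)] at hco
          by_cases hi2 : i2 = 1
          · subst hi2
            rw [if_pos (le_refl 1)] at hco
            simp only [Nat.sub_self, pow_zero, Nat.choose_zero_right, Nat.cast_one, mul_one,
              one_mul] at hco
            have hj11 : j1 = 1 := by
              have : (j1:ℝ) = 1 := by linarith
              exact_mod_cast this
            subst hj11
            rw [map_one] at hE
            have hz : C c * ((X:ℝ[X])^i3*(1-X)^j3) = 0 := by linear_combination hE
            have hz2 := congrArg (fun q => coeff q i3) hz
            simp only [coeff_C_mul, L2, le_refl, if_true, Nat.sub_self, pow_zero,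
              Nat.choose_zero_right, Nat.cast_one, mul_one, one_mul, coeff_zero] at hz2
            exact absurd hz2 hc.ne
          · rw [if_neg (by omega : ¬ i2 ≤ 1)] at hco
            have haj : (j1:ℝ) = 0 := by linarith
            exact absurd (by exact_mod_cast haj : j1 = 0) hj1
    · rw [if_neg hj2] at e1
      by_cases hj3 : j3 = 0
      · rw [if_pos hj3] at e1; nlinarith
      · rw [if_neg hj3] at e1; nlinarith

lemma caseTTF (ha : 0 < a) (hb : 0 < b) (hc : c < 0)
    (h12 : ¬(i1 = i2 ∧ j1 = j2))
    (hE : C a * ((X:ℝ[X])^i1 * (1-X)^j1) + C b * ((X:ℝ[X])^i2 * (1-X)^j2)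
      + C c * ((X:ℝ[X])^i3 * (1-X)^j3) = 1)
    (h1 : i1 = 0) (h2 : i2 = 0) (h3 : i3 ≠ 0) : False := by
  subst h1 h2
  have e0 : a + b = 1 := by simpa [h3] using Ev0 hE
  have e1 := Ev0 (Eswap hE)
  by_cases hj1 : j1 = 0
  · have hj2 : j2 ≠ 0 := fun h => h12 ⟨rfl, hj1.trans h.symm⟩
    rw [if_pos hj1, if_neg hj2] at e1
    by_cases hj3 : j3 = 0
    · rw [if_pos hj3] at e1; nlinarith
    · rw [if_neg hj3] at e1; nlinarith
  · rw [if_neg hj1] at e1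
    by_cases hj2 : j2 = 0
    · rw [if_pos hj2] at e1
      by_cases hj3 : j3 = 0
      · rw [if_pos hj3] at e1; nlinarith
      · rw [if_neg hj3] at e1; nlinarith
    · rw [if_neg hj2] at e1
      by_cases hj3 : j3 = 0
      · rw [if_pos hj3] at e1; nlinarith
      · rw [if_neg hj3] at e1; nlinarith

lemma caseTTT (hc : c < 0)
    (h13 : ¬(i1 = i3 ∧ j1 = j3)) (h23 : ¬(i2 = i3 ∧ j2 = j3))
    (hE : C a * ((X:ℝ[X])^i1 * (1-X)^j1) + C b * ((X:ℝ[X])^i2 * (1-X)^j2)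
      + C c * ((X:ℝ[X])^i3 * (1-X)^j3) = 1)
    (h1 : i1 = 0) (h2 : i2 = 0) (h3 : i3 = 0) : False := by
  subst h1 h2 h3
  have hj13 : j1 ≠ j3 := fun h => h13 ⟨rfl, h⟩
  have hj23 : j2 ≠ j3 := fun h => h23 ⟨rfl, h⟩
  have hco := Ecoeff (Eswap hE) j3
  have z1 : (if j1 ≤ j3 then ((-1:ℝ))^(j3-j1) * ((0:ℕ).choose (j3-j1)) else 0) = 0 := by
    split_ifs with h
    · rw [Nat.choose_eq_zero_of_lt (by omega)]; simp
    · rfl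
  have z2 : (if j2 ≤ j3 then ((-1:ℝ))^(j3-j2) * ((0:ℕ).choose (j3-j2)) else 0) = 0 := by
    split_ifs with h
    · rw [Nat.choose_eq_zero_of_lt (by omega)]; simp
    · rfl
  rw [z1, z2, if_pos (le_refl j3)] at hco
  simp only [Nat.sub_self, pow_zero, Nat.choose_zero_right, Nat.cast_one, mul_one, mul_zero,
    one_mul, zero_add, add_zero] at hco
  split_ifs at hco <;> linarith

lemma core (ha : 0 < a) (hb : 0 < b) (hc : c < 0)
    (h12 : ¬(i1 = i2 ∧ j1 = j2)) (h13 : ¬(i1 = i3 ∧ j1 = j3)) (h23 : ¬(i2 = i3 ∧ j2 = j3))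
    (hE : C a * ((X:ℝ[X])^i1 * (1-X)^j1) + C b * ((X:ℝ[X])^i2 * (1-X)^j2)
      + C c * ((X:ℝ[X])^i3 * (1-X)^j3) = 1) :
    Out i1 j1 i2 j2 i3 j3 a b c := by
  have hE' : C b * ((X:ℝ[X])^i2 * (1-X)^j2) + C a * ((X:ℝ[X])^i1 * (1-X)^j1)
      + C c * ((X:ℝ[X])^i3 * (1-X)^j3) = 1 := by linear_combination hE
  have h12' : ¬(i2 = i1 ∧ j2 = j1) := fun ⟨x, y⟩ => h12 ⟨x.symm, y.symm⟩
  by_cases h1 : i1 = 0 <;> by_cases h2 : i2 = 0 <;> by_cases h3 : i3 = 0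
  · exact absurd (caseTTT hc h13 h23 hE h1 h2 h3) not_false
  · exact absurd (caseTTF ha hb hc h12 hE h1 h2 h3) not_false
  · exact caseTFT ha hb hc h12 h13 h23 hE h1 h2 h3
  · exact caseTFF ha hb hc h12 h13 h23 hE h1 h2 h3
  · exact out_swap (caseTFT hb ha hc h12' h23 h13 hE' h2 h1 h3)
  · exact out_swap (caseTFF hb ha hc h12' h23 h13 hE' h2 h1 h3)
  · -- i1,i2 ≠ 0, i3 = 0 : c = 1 contradiction
    have e0 : c = 1 := by simpa [h1, h2, h3] using Ev0 hE
    linarith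
  · have e0 : (0:ℝ) = 1 := by simpa [h1, h2, h3] using Ev0 hE
    norm_num at e0
end core2

end UnivariateHelpers

open MvPolynomial

lemma fin2_eq {u v : Fin 2 →₀ ℕ} (h0 : u 0 = v 0) (h1 : u 1 = v 1) : u = v := by
  ext i; fin_cases i <;> assumption

lemma fin2_single {u : Fin 2 →₀ ℕ} (n m : ℕ) (h0 : u 0 = n) (h1 : u 1 = m) :
    u = Finsupp.single 0 n + Finsupp.single 1 m := by
  apply fin2_eq <;> simp [h0, h1, Finsupp.single_apply]

lemma eval_my (f : Fin 2 → ℝ) (m : Fin 2 →₀ ℕ) (r : ℝ) :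
    eval f (monomial m r) = r * (f 0 ^ m 0 * f 1 ^ m 1) := by
  rw [eval_monomial, Finsupp.prod_fintype]
  · rw [Fin.prod_univ_two]
  · intro i; exact pow_zero _

theorem stmt_7 (p : MvPolynomial (Fin 2) ℝ)
    (hcard : p.support.card = 3)
    (hpos : (p.support.filter fun m => 0 < coeff m p).card = 2)
    (hneg : (p.support.filter fun m => coeff m p < 0).card = 1)
    (hone : ∀ x y : ℝ, x + y = 1 → eval ![x, y] p = 1) :
    ∃ σ : Equiv.Perm (Fin 2),
      rename σ p = X 0 ^ 2 + C 2 * X 1 - X 1 ^ 2 ∨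
      ∃ α : ℝ, 1 < α ∧ rename σ p = C α * X 0 + C α * X 1 - C (α - 1) := by
  obtain ⟨u, v, huv, hP⟩ := Finset.card_eq_two.1 hpos
  obtain ⟨w, hN⟩ := Finset.card_eq_one.1 hneg
  have hu : u ∈ p.support.filter fun m => 0 < coeff m p := by rw [hP]; simp
  have hv : v ∈ p.support.filter fun m => 0 < coeff m p := by rw [hP]; simp
  have hw : w ∈ p.support.filter fun m => coeff m p < 0 := by rw [hN]; simp
  have ha : 0 < coeff u p := (Finset.mem_filter.1 hu).2
  have hb : 0 < coeff v p := (Finset.mem_filter.1 hv).2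
  have hc : coeff w p < 0 := (Finset.mem_filter.1 hw).2
  have huw : u ≠ w := fun h => by rw [h] at ha; linarith
  have hvw : v ≠ w := fun h => by rw [h] at hb; linarith
  have hsupp : p.support = {u, v, w} := by
    have hPN : p.support = (p.support.filter fun m => 0 < coeff m p)
        ∪ (p.support.filter fun m => coeff m p < 0) := by
      ext m
      simp only [Finset.mem_union, Finset.mem_filter, MvPolynomial.mem_support_iff]
      constructor
      · intro h
        rcases h.lt_or_gt with h' | h'
        · exact Or.inr ⟨h, h'⟩
        · exact Or.inl ⟨h, h'⟩
      · rintro (⟨h, _⟩ | ⟨h, _⟩) <;> exact h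
    rw [hPN, hP, hN]
    ext m; simp [or_assoc]
  have hp : p = monomial u (coeff u p) + monomial v (coeff v p) + monomial w (coeff w p) := by
    conv_lhs => rw [← support_sum_monomial_coeff p]
    rw [hsupp]
    rw [Finset.sum_insert (by simp [huv, huw]), Finset.sum_insert (by simp [hvw]),
      Finset.sum_singleton, add_assoc]
  -- the univariate identity
  have hE : Polynomial.C (coeff u p) * ((Polynomial.X:Polynomial ℝ)^(u 0) * (1-Polynomial.X)^(u 1))
      + Polynomial.C (coeff v p) * ((Polynomial.X:Polynomial ℝ)^(v 0) * (1-Polynomial.X)^(v 1))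
      + Polynomial.C (coeff w p) * ((Polynomial.X:Polynomial ℝ)^(w 0) * (1-Polynomial.X)^(w 1))
      = 1 := by
    apply Polynomial.funext
    intro t
    have h1 := hone t (1-t) (by ring)
    rw [hp] at h1
    simp only [map_add, eval_my, Matrix.cons_val_zero, Matrix.cons_val_one, Matrix.head_cons] at h1
    simp only [Polynomial.eval_add, Polynomial.eval_mul, Polynomial.eval_C, Polynomial.eval_pow,
      Polynomial.eval_sub, Polynomial.eval_X, Polynomial.eval_one]
    linarith
  have hd12 : ¬(u 0 = v 0 ∧ u 1 = v 1) := fun ⟨x, y⟩ => huv (fin2_eq x y)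
  have hd13 : ¬(u 0 = w 0 ∧ u 1 = w 1) := fun ⟨x, y⟩ => huw (fin2_eq x y)
  have hd23 : ¬(v 0 = w 0 ∧ v 1 = w 1) := fun ⟨x, y⟩ => hvw (fin2_eq x y)
  have hout := core ha hb hc hd12 hd13 hd23 hE
  have hid : ⇑(1 : Equiv.Perm (Fin 2)) = id := rfl
  set A := coeff u p with hA
  set B := coeff v p with hB
  set Cc := coeff w p with hCc
  rcases hout with ⟨h1,h2,h3,h4,h5,h6,h7,h8,h9⟩|⟨h1,h2,h3,h4,h5,h6,h7,h8,h9⟩|⟨h1,h2,h3,h4,h5,h6,h7,h8,h9⟩|⟨h1,h2,h3,h4,h5,h6,h7,h8,h9⟩|⟨h1,h2,h3,h4,h5,h6,h7,h8,h9⟩|⟨h1,h2,h3,h4,h5,h6,h7,h8,h9⟩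
  · -- A1 : u=(2,0) v=(0,1) w=(0,2), sigma = 1
    refine ⟨1, Or.inl ?_⟩
    have hu' : u = Finsupp.single 0 2 := fin2_eq (by simp [h4]) (by simp [h5])
    have hv' : v = Finsupp.single 1 1 := fin2_eq (by simp [h6]) (by simp [h7])
    have hw' : w = Finsupp.single 1 2 := fin2_eq (by simp [h8]) (by simp [h9])
    rw [hid, rename_id, AlgHom.id_apply, hp, h1, h2, h3, hu', hv', hw',
      ← C_mul_X_pow_eq_monomial, ← C_mul_X_pow_eq_monomial, ← C_mul_X_pow_eq_monomial,
      map_one, map_neg, map_one]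
    ring
  · -- A2 : u=(0,1) v=(2,0) w=(0,2), sigma = 1
    refine ⟨1, Or.inl ?_⟩
    have hu' : u = Finsupp.single 1 1 := fin2_eq (by simp [h4]) (by simp [h5])
    have hv' : v = Finsupp.single 0 2 := fin2_eq (by simp [h6]) (by simp [h7])
    have hw' : w = Finsupp.single 1 2 := fin2_eq (by simp [h8]) (by simp [h9])
    rw [hid, rename_id, AlgHom.id_apply, hp, h1, h2, h3, hu', hv', hw',
      ← C_mul_X_pow_eq_monomial, ← C_mul_X_pow_eq_monomial, ← C_mul_X_pow_eq_monomial,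
      map_one, map_neg, map_one]
    ring
  · -- A3 : u=(0,2) v=(1,0) w=(2,0), sigma = swap
    refine ⟨Equiv.swap 0 1, Or.inl ?_⟩
    have hu' : u = Finsupp.single 1 2 := fin2_eq (by simp [h4]) (by simp [h5])
    have hv' : v = Finsupp.single 0 1 := fin2_eq (by simp [h6]) (by simp [h7])
    have hw' : w = Finsupp.single 0 2 := fin2_eq (by simp [h8]) (by simp [h9])
    rw [hp, h1, h2, h3, hu', hv', hw', map_add, map_add, rename_monomial, rename_monomial,
      rename_monomial, Finsupp.mapDomain_single, Finsupp.mapDomain_single,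
      Finsupp.mapDomain_single]
    simp only [Equiv.swap_apply_left, Equiv.swap_apply_right]
    rw [← C_mul_X_pow_eq_monomial, ← C_mul_X_pow_eq_monomial, ← C_mul_X_pow_eq_monomial,
      map_one, map_neg, map_one]
    ring
  · -- A4 : u=(1,0) v=(0,2) w=(2,0), sigma = swap
    refine ⟨Equiv.swap 0 1, Or.inl ?_⟩
    have hu' : u = Finsupp.single 0 1 := fin2_eq (by simp [h4]) (by simp [h5])
    have hv' : v = Finsupp.single 1 2 := fin2_eq (by simp [h6]) (by simp [h7])
    have hw' : w = Finsupp.single 0 2 := fin2_eq (by simp [h8]) (by simp [h9])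
    rw [hp, h1, h2, h3, hu', hv', hw', map_add, map_add, rename_monomial, rename_monomial,
      rename_monomial, Finsupp.mapDomain_single, Finsupp.mapDomain_single,
      Finsupp.mapDomain_single]
    simp only [Equiv.swap_apply_left, Equiv.swap_apply_right]
    rw [← C_mul_X_pow_eq_monomial, ← C_mul_X_pow_eq_monomial, ← C_mul_X_pow_eq_monomial,
      map_one, map_neg, map_one]
    ring
  · -- B1 : u=(1,0) v=(0,1) w=(0,0)
    refine ⟨1, Or.inr ⟨A, h1, ?_⟩⟩
    have hu' : u = Finsupp.single 0 1 := fin2_eq (by simp [h4]) (by simp [h5])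
    have hv' : v = Finsupp.single 1 1 := fin2_eq (by simp [h6]) (by simp [h7])
    have hw' : w = 0 := fin2_eq (by simp [h8]) (by simp [h9])
    have hC : (C (1 - A) : MvPolynomial (Fin 2) ℝ) = -C (A - 1) := by
      rw [← map_neg, neg_sub]
    rw [hid, rename_id, AlgHom.id_apply, hp, h2, h3, hu', hv', hw',
      ← C_mul_X_pow_eq_monomial, ← C_mul_X_pow_eq_monomial, ← C_apply, hC]
    ring
  · -- B2 : u=(0,1) v=(1,0) w=(0,0)
    refine ⟨1, Or.inr ⟨A, h1, ?_⟩⟩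
    have hu' : u = Finsupp.single 1 1 := fin2_eq (by simp [h4]) (by simp [h5])
    have hv' : v = Finsupp.single 0 1 := fin2_eq (by simp [h6]) (by simp [h7])
    have hw' : w = 0 := fin2_eq (by simp [h8]) (by simp [h9])
    have hC : (C (1 - A) : MvPolynomial (Fin 2) ℝ) = -C (A - 1) := by
      rw [← map_neg, neg_sub]
    rw [hid, rename_id, AlgHom.id_apply, hp, h2, h3, hu', hv', hw',
      ← C_mul_X_pow_eq_monomial, ← C_mul_X_pow_eq_monomial, ← C_apply, hC]
    ring
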